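/- Assume 0 < α, let q > 3/2 - 2α, and let u be a trigonometric polynomial (real-valued, mean zero, periodic). Then for every s ≥ 0 and β ≥ 0 with q > 3/2 - 2β, |∫ u² (-Δ)^s u_x dx| ≤ C(β,q,s) ‖u‖_{H^q} ‖u‖_{H^{s+β}}², where (-Δ)^s u_x denotes the function with Fourier coefficients (2π i k)(2π|k|)^{2s} û(k) (up to normalization of constants). -/
import Mathlib

/-- The `H^r` norm of a (finitely supported) Fourier coefficient sequence. -/
noncomputable def hnorm (r : ℝ) (c : ℤ → ℂ) : ℝ :=
  (∑' n : ℤ, |(n : ℝ)| ^ (2 * r) * ‖c n‖ ^ 2) ^ ((1 : ℝ) / 2)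

lemma rpow_sq (x : ℝ) (hx : 0 ≤ x) (e : ℝ) : (x ^ e) ^ 2 = x ^ (2 * e) := by
  rw [← Real.rpow_natCast (x ^ e) 2, ← Real.rpow_mul hx]
  norm_num [mul_comm]

lemma hnorm_sq (r : ℝ) (c : ℤ → ℂ) :
    hnorm r c ^ 2 = ∑' n : ℤ, |(n : ℝ)| ^ (2 * r) * ‖c n‖ ^ 2 := by
  have h0 : 0 ≤ ∑' n : ℤ, |(n : ℝ)| ^ (2 * r) * ‖c n‖ ^ 2 :=
    tsum_nonneg (fun n => by positivity)
  rw [hnorm, ← Real.sqrt_eq_rpow, Real.sq_sqrt h0]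

lemma hnorm_nonneg (r : ℝ) (c : ℤ → ℂ) : 0 ≤ hnorm r c :=
  Real.rpow_nonneg (tsum_nonneg (fun n => by positivity)) _

def eshift : ℤ × ℤ ≃ ℤ × ℤ where
  toFun p := (-(p.1 + p.2), p.2)
  invFun p := (-(p.1 + p.2), p.2)
  left_inv p := by
    obtain ⟨x, y⟩ := p
    show (-(-(x + y) + y), y) = (x, y)
    have h : -(-(x + y) + y) = x := by ring
    rw [h]
  right_inv p := by
    obtain ⟨x, y⟩ := p
    show (-(-(x + y) + y), y) = (x, y)
    have h : -(-(x + y) + y) = x := by ring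
    rw [h]

lemma eshift_apply (p : ℤ × ℤ) : eshift p = (-(p.1 + p.2), p.2) := rfl

lemma rpow_mvt {p : ℝ} (hp : 1 ≤ p) {x y : ℝ} (hy : 0 ≤ y) (hxy : y ≤ x) :
    x ^ p - y ^ p ≤ p * (x - y) * x ^ (p - 1) := by
  rcases eq_or_lt_of_le hxy with rfl | hlt
  · simp
  · obtain ⟨c, hc, hslope⟩ := exists_hasDerivAt_eq_slope (fun t => t ^ p)
      (fun t => p * t ^ (p - 1)) hlt
      (fun t _ => (Real.hasDerivAt_rpow_const (p := p) (Or.inr hp)).continuousAt.continuousWithinAt)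
      (fun t _ => Real.hasDerivAt_rpow_const (Or.inr hp))
    have hxne : x - y ≠ 0 := by linarith
    have heq : x ^ p - y ^ p = p * c ^ (p - 1) * (x - y) := by
      field_simp at hslope; linarith [hslope]
    rw [heq]
    have hcx : c ^ (p - 1) ≤ x ^ (p - 1) :=
      Real.rpow_le_rpow (le_trans hy hc.1.le) hc.2.le (by linarith)
    have hp0 : 0 ≤ p := by linarith
    have h1 : p * c ^ (p - 1) * (x - y) ≤ p * x ^ (p - 1) * (x - y) :=
      mul_le_mul_of_nonneg_right (mul_le_mul_of_nonneg_left hcx hp0) (by linarith)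
    linarith

noncomputable def gfun (s x : ℝ) : ℝ := x * |x| ^ (2 * s)

lemma gfun_neg (s x : ℝ) : gfun s (-x) = - gfun s x := by
  simp [gfun, abs_neg]

lemma gfun_nonneg (s : ℝ) (hs : 0 ≤ s) {x : ℝ} (hx : 0 ≤ x) :
    gfun s x = x ^ (2 * s + 1) := by
  rcases eq_or_lt_of_le hx with rfl | hx'
  · simp [gfun, Real.zero_rpow (by positivity : (2:ℝ) * s + 1 ≠ 0)]
  · rw [gfun, abs_of_nonneg hx, Real.rpow_add hx', Real.rpow_one]; ring

lemma g_core (s : ℝ) (hs : 0 ≤ s) {x y : ℝ} (hx : 0 ≤ x) (hyx : |y| ≤ x) :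
    |gfun s x - gfun s y| ≤ (2 * s + 2) * |x - y| * x ^ (2 * s) := by
  have hgx : gfun s x = x ^ (2 * s + 1) := gfun_nonneg s hs hx
  have hxx : x * x ^ (2 * s) = x ^ (2 * s + 1) := by
    rcases eq_or_lt_of_le hx with rfl | hx'
    · rw [← hgx]; simp [gfun]
    · rw [Real.rpow_add hx', Real.rpow_one]; ring
  have hxs : 0 ≤ x ^ (2 * s) := Real.rpow_nonneg hx _
  rcases le_or_gt 0 y with hy | hy
  · have hyx' : y ≤ x := (abs_of_nonneg hy) ▸ hyx
    have hgy : gfun s y = y ^ (2 * s + 1) := gfun_nonneg s hs hy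
    have hmono : y ^ (2 * s + 1) ≤ x ^ (2 * s + 1) :=
      Real.rpow_le_rpow hy hyx' (by positivity)
    have hmvt := rpow_mvt (p := 2 * s + 1) (by linarith) hy hyx'
    have hp : (2 * s + 1 : ℝ) - 1 = 2 * s := by ring
    rw [hp] at hmvt
    have e1 : |gfun s x - gfun s y| = x ^ (2 * s + 1) - y ^ (2 * s + 1) := by
      rw [hgx, hgy]; exact abs_of_nonneg (by linarith)
    have e2 : |x - y| = x - y := abs_of_nonneg (by linarith)
    rw [e1, e2]
    nlinarith
  · have hgy : gfun s y = -(|y| ^ (2 * s + 1)) := by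
      have h' : gfun s y = - gfun s (-y) := by rw [gfun_neg]; ring
      rw [h', gfun_nonneg s hs (by linarith : (0:ℝ) ≤ -y), abs_of_neg hy]
    have hyp : |y| ^ (2 * s + 1) ≤ x ^ (2 * s + 1) :=
      Real.rpow_le_rpow (abs_nonneg y) hyx (by positivity)
    have hyp0 : 0 ≤ |y| ^ (2 * s + 1) := Real.rpow_nonneg (abs_nonneg y) _
    have hxp : 0 ≤ x ^ (2 * s + 1) := Real.rpow_nonneg hx _
    have e1 : |gfun s x - gfun s y| = x ^ (2 * s + 1) + |y| ^ (2 * s + 1) := by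
      rw [hgx, hgy, sub_neg_eq_add]; exact abs_of_nonneg (by linarith)
    have e2 : |x - y| = x - y := abs_of_nonneg (by linarith)
    rw [e1, e2]
    nlinarith [mul_le_mul_of_nonneg_right (show x ≤ x - y by linarith) hxs]

lemma g_lip (s : ℝ) (hs : 0 ≤ s) (x y : ℝ) :
    |gfun s x - gfun s y| ≤ (2 * s + 2) * |x - y| * (max |x| |y|) ^ (2 * s) := by
  have key : ∀ u v : ℝ, |v| ≤ |u| →
      |gfun s u - gfun s v| ≤ (2 * s + 2) * |u - v| * (max |u| |v|) ^ (2 * s) := by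
    intro u v huv
    rw [max_eq_left huv]
    rcases le_or_gt 0 u with hu | hu
    · rw [abs_of_nonneg hu] at huv ⊢
      exact g_core s hs hu huv
    · have huv' : |-v| ≤ -u := by rw [abs_neg]; rwa [abs_of_neg hu] at huv
      have hcore := g_core s hs (by linarith : (0:ℝ) ≤ -u) huv'
      rw [gfun_neg, gfun_neg] at hcore
      have e1 : -gfun s u - -gfun s v = -(gfun s u - gfun s v) := by ring
      have e2 : -u - -v = -(u - v) := by ring
      rw [e1, e2, abs_neg, abs_neg] at hcore
      rwa [abs_of_neg hu]
  rcases le_total |y| |x| with h | h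
  · exact key x y h
  · rw [abs_sub_comm, abs_sub_comm x y, max_comm]
    exact key y x h

lemma trio_core (s β : ℝ) (hs : 0 ≤ s) (hβ : 0 ≤ β) {k a b : ℤ}
    (hk : k ≠ 0) (ha : a ≠ 0) (hb : b ≠ 0) (hsum : k + a + b = 0)
    (h1 : |a| ≤ |b|) (h2 : |b| ≤ |k|) :
    |gfun s k + gfun s a + gfun s b| ≤
      (2 * s + 3) * 2 ^ (s + β) *
        (|(a : ℝ)| ^ (1 - 2 * β) * (|(b : ℝ)| ^ (s + β) * |(k : ℝ)| ^ (s + β))) := by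
  set A := |(a : ℝ)| with hA
  set B := |(b : ℝ)| with hB
  set K := |(k : ℝ)| with hK
  have hA1 : 1 ≤ A := by
    rw [hA, ← Int.cast_abs]; exact_mod_cast Int.one_le_abs ha
  have hApos : (0 : ℝ) < A := by linarith
  have hAB : A ≤ B := by rw [hA, hB, ← Int.cast_abs, ← Int.cast_abs]; exact_mod_cast h1
  have hBK : B ≤ K := by rw [hB, hK, ← Int.cast_abs, ← Int.cast_abs]; exact_mod_cast h2
  have hKpos : (0 : ℝ) < K := by linarith
  have hBpos : (0 : ℝ) < B := by linarith
  have hK2B : K ≤ 2 * B := by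
    have : (k : ℝ) = -((a : ℝ) + (b : ℝ)) := by
      have : (k : ℝ) + a + b = 0 := by exact_mod_cast congrArg (Int.cast : ℤ → ℝ) hsum
      linarith
    rw [hK, this, abs_neg]
    calc |(a : ℝ) + b| ≤ |(a : ℝ)| + |(b : ℝ)| := abs_add_le _ _
      _ ≤ 2 * B := by rw [← hA, ← hB]; linarith
  -- step 1 : |g k + g a + g b| ≤ (2s+3) * A * K^(2s)
  have step1 : |gfun s k + gfun s a + gfun s b| ≤ (2 * s + 3) * (A * K ^ (2 * s)) := by
    have hlip := g_lip s hs (k : ℝ) (-(b : ℝ))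
    rw [gfun_neg] at hlip
    have e1 : (k : ℝ) - -(b : ℝ) = -(a : ℝ) := by
      have : (k : ℝ) + a + b = 0 := by exact_mod_cast congrArg (Int.cast : ℤ → ℝ) hsum
      linarith
    rw [e1, abs_neg, ← hA, abs_neg, ← hB, ← hK, max_eq_left hBK] at hlip
    have hga : |gfun s a| = A * A ^ (2 * s) := by
      rw [gfun, abs_mul, abs_of_nonneg (Real.rpow_nonneg (abs_nonneg _) _)]
    have hAK2s : A ^ (2 * s) ≤ K ^ (2 * s) :=
      Real.rpow_le_rpow hApos.le (by linarith) (by positivity)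
    have hKs : (0 : ℝ) ≤ K ^ (2 * s) := Real.rpow_nonneg hKpos.le _
    calc |gfun s k + gfun s a + gfun s b|
        = |(gfun s k - - gfun s b) + gfun s a| := by ring_nf
      _ ≤ |gfun s k - - gfun s b| + |gfun s a| := abs_add_le _ _
      _ ≤ (2 * s + 2) * A * K ^ (2 * s) + A * A ^ (2 * s) :=
          add_le_add hlip (le_of_eq hga)
      _ ≤ (2 * s + 3) * (A * K ^ (2 * s)) := by nlinarith
  -- step 2 : A * K^(2s) ≤ 2^(s+β) * (A^(1-2β) * (B^(s+β) * K^(s+β)))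
  have step2 : A * K ^ (2 * s) ≤ 2 ^ (s + β) * (A ^ (1 - 2 * β) * (B ^ (s + β) * K ^ (s + β))) := by
    have e1 : A = A ^ (1 - 2 * β) * A ^ (2 * β) := by
      rw [← Real.rpow_add hApos]; norm_num
    have e2 : A ^ (2 * β) ≤ K ^ (2 * β) :=
      Real.rpow_le_rpow hApos.le (by linarith) (by positivity)
    have e3 : K ^ (2 * β) * K ^ (2 * s) = K ^ (s + β) * K ^ (s + β) := by
      rw [← Real.rpow_add hKpos, ← Real.rpow_add hKpos]; ring_nf
    have e4 : K ^ (s + β) ≤ 2 ^ (s + β) * B ^ (s + β) := by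
      rw [← Real.mul_rpow (by norm_num) hBpos.le]
      exact Real.rpow_le_rpow hKpos.le hK2B (by positivity)
    calc A * K ^ (2 * s) = A ^ (1 - 2 * β) * (A ^ (2 * β) * K ^ (2 * s)) := by
          rw [← mul_assoc, ← Real.rpow_add hApos]
          have h' : 1 - 2 * β + 2 * β = (1 : ℝ) := by ring
          rw [h', Real.rpow_one]
      _ ≤ A ^ (1 - 2 * β) * (K ^ (2 * β) * K ^ (2 * s)) :=
          mul_le_mul_of_nonneg_left
            (mul_le_mul_of_nonneg_right e2 (Real.rpow_nonneg hKpos.le _))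
            (Real.rpow_nonneg hApos.le _)
      _ = A ^ (1 - 2 * β) * (K ^ (s + β) * K ^ (s + β)) := by rw [e3]
      _ ≤ A ^ (1 - 2 * β) * ((2 ^ (s + β) * B ^ (s + β)) * K ^ (s + β)) :=
          mul_le_mul_of_nonneg_left
            (mul_le_mul_of_nonneg_right e4 (Real.rpow_nonneg hKpos.le _))
            (Real.rpow_nonneg hApos.le _)
      _ = 2 ^ (s + β) * (A ^ (1 - 2 * β) * (B ^ (s + β) * K ^ (s + β))) := by ring
  calc |gfun s k + gfun s a + gfun s b| ≤ (2 * s + 3) * (A * K ^ (2 * s)) := step1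
    _ ≤ (2 * s + 3) * (2 ^ (s + β) * (A ^ (1 - 2 * β) * (B ^ (s + β) * K ^ (s + β)))) := by
        have : (0:ℝ) ≤ 2 * s + 3 := by linarith
        exact mul_le_mul_of_nonneg_left step2 this
    _ = (2 * s + 3) * 2 ^ (s + β) * (A ^ (1 - 2 * β) * (B ^ (s + β) * K ^ (s + β))) := by ring

lemma trio (s β : ℝ) (hs : 0 ≤ s) (hβ : 0 ≤ β) {k a b : ℤ}
    (hk : k ≠ 0) (ha : a ≠ 0) (hb : b ≠ 0) (hsum : k + a + b = 0) :
    |gfun s k + gfun s a + gfun s b| ≤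
      (2 * s + 3) * 2 ^ (s + β) *
        (|(a : ℝ)| ^ (1 - 2 * β) * (|(b : ℝ)| ^ (s + β) * |(k : ℝ)| ^ (s + β))
         + |(b : ℝ)| ^ (1 - 2 * β) * (|(a : ℝ)| ^ (s + β) * |(k : ℝ)| ^ (s + β))
         + |(k : ℝ)| ^ (1 - 2 * β) * (|(a : ℝ)| ^ (s + β) * |(b : ℝ)| ^ (s + β))) := by
  have hC : (0 : ℝ) ≤ (2 * s + 3) * 2 ^ (s + β) := by positivity
  have t1 : (0:ℝ) ≤ |(a : ℝ)| ^ (1 - 2 * β) * (|(b : ℝ)| ^ (s + β) * |(k : ℝ)| ^ (s + β)) := by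
    positivity
  have t2 : (0:ℝ) ≤ |(b : ℝ)| ^ (1 - 2 * β) * (|(a : ℝ)| ^ (s + β) * |(k : ℝ)| ^ (s + β)) := by
    positivity
  have t3 : (0:ℝ) ≤ |(k : ℝ)| ^ (1 - 2 * β) * (|(a : ℝ)| ^ (s + β) * |(b : ℝ)| ^ (s + β)) := by
    positivity
  rcases le_total |a| |b| with hab | hab <;> rcases le_total |b| |k| with hbk | hbk <;>
    rcases le_total |a| |k| with hak | hak
  -- |a| ≤ |b| ≤ |k|
  · have h := trio_core s β hs hβ hk ha hb hsum hab hbk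
    nlinarith
  · have h := trio_core s β hs hβ hk ha hb hsum hab hbk
    nlinarith
  -- |a| ≤ |k| ≤ |b| : smallest a, largest b : core with (k := b, a := a, b := k)
  · have h := trio_core s β hs hβ hb ha hk (by omega) hak hbk
    have e : gfun s (k:ℝ) + gfun s (a:ℝ) + gfun s (b:ℝ)
        = gfun s (b:ℝ) + gfun s (a:ℝ) + gfun s (k:ℝ) := by ring
    rw [e]
    nlinarith
  · -- |a| ≤ |b|, |k| ≤ |b|, |k| ≤ |a| : order k ≤ a ≤ b : core (k := b, a := k, b := a)
    have h := trio_core s β hs hβ hb hk ha (by omega) hak hab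
    have e : gfun s (k:ℝ) + gfun s (a:ℝ) + gfun s (b:ℝ)
        = gfun s (b:ℝ) + gfun s (k:ℝ) + gfun s (a:ℝ) := by ring
    rw [e]
    nlinarith
  · -- |b| ≤ |a|, |b| ≤ |k|, |a| ≤ |k| : order b ≤ a ≤ k : core (k := k, a := b, b := a)
    have h := trio_core s β hs hβ hk hb ha (by omega) hab hak
    have e : gfun s (k:ℝ) + gfun s (a:ℝ) + gfun s (b:ℝ)
        = gfun s (k:ℝ) + gfun s (b:ℝ) + gfun s (a:ℝ) := by ring
    rw [e]
    nlinarith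
  · -- |b| ≤ |a|, |b| ≤ |k|, |k| ≤ |a| : order b ≤ k ≤ a : core (k := a, a := b, b := k)
    have h := trio_core s β hs hβ ha hb hk (by omega) hbk hak
    have e : gfun s (k:ℝ) + gfun s (a:ℝ) + gfun s (b:ℝ)
        = gfun s (a:ℝ) + gfun s (b:ℝ) + gfun s (k:ℝ) := by ring
    rw [e]
    nlinarith
  · -- |b| ≤ |a|, |k| ≤ |b| : order k ≤ b ≤ a : core (k := a, a := k, b := b)
    have h := trio_core s β hs hβ ha hk hb (by omega) hbk hab
    have e : gfun s (k:ℝ) + gfun s (a:ℝ) + gfun s (b:ℝ)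
        = gfun s (a:ℝ) + gfun s (k:ℝ) + gfun s (b:ℝ) := by ring
    rw [e]
    nlinarith
  · have h := trio_core s β hs hβ ha hk hb (by omega) hbk hab
    have e : gfun s (k:ℝ) + gfun s (a:ℝ) + gfun s (b:ℝ)
        = gfun s (a:ℝ) + gfun s (k:ℝ) + gfun s (b:ℝ) := by ring
    rw [e]
    nlinarith

/-- Lemma 2.1: for a real-valued mean-zero trigonometric polynomial `u` (represented by
its Fourier coefficients `c`), and `s ≥ 0`, `β ≥ 0` with `q > 3/2 - 2β`,
`|∫ u² (-Δ)^s u_x dx| ≤ C(β,q,s) ‖u‖_{H^q} ‖u‖_{H^{s+β}}²` (up to normalization, the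
left-hand side is the symmetrizable trilinear sum `Σ_{k+a+b=0} k|k|^{2s} û(k)û(a)û(b)`). -/
theorem stmt_16 (α q s β : ℝ) (hα : 0 < α) (hq : 3 / 2 - 2 * α < q)
    (hs : 0 ≤ s) (hβ : 0 ≤ β) (hqβ : 3 / 2 - 2 * β < q) :
    ∃ C > 0, ∀ c : ℤ → ℂ,
      (Function.support c).Finite → c 0 = 0 →
      (∀ n : ℤ, c (-n) = starRingEnd ℂ (c n)) →
      ‖∑' k : ℤ, ∑' a : ℤ, (k : ℂ) * ((|(k : ℝ)| ^ (2 * s) : ℝ) : ℂ) * c k * c a * c (-(k + a))‖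
        ≤ C * hnorm q c * hnorm (s + β) c ^ 2 := by
  classical
  have hsum_exp : Summable fun n : ℤ => |(n : ℝ)| ^ (2 * (1 - 2 * β - q)) := by
    have h1 : (1 : ℝ) < -(2 * (1 - 2 * β - q)) := by linarith
    have h2 := Real.summable_abs_int_rpow h1
    simpa using h2
  set C₂ : ℝ := Real.sqrt (∑' n : ℤ, |(n : ℝ)| ^ (2 * (1 - 2 * β - q))) with hC₂
  have htsum_nonneg : 0 ≤ ∑' n : ℤ, |(n : ℝ)| ^ (2 * (1 - 2 * β - q)) :=
    tsum_nonneg fun n => Real.rpow_nonneg (abs_nonneg _) _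
  have hC₂sq : C₂ ^ 2 = ∑' n : ℤ, |(n : ℝ)| ^ (2 * (1 - 2 * β - q)) := Real.sq_sqrt htsum_nonneg
  have hC₂one : (1 : ℝ) ≤ C₂ := by
    have h1 : (1 : ℝ) ≤ ∑' n : ℤ, |(n : ℝ)| ^ (2 * (1 - 2 * β - q)) := by
      have h2 := Summable.le_tsum hsum_exp 1 (fun j _ => Real.rpow_nonneg (abs_nonneg _) _)
      simpa using h2
    calc (1 : ℝ) = Real.sqrt 1 := Real.sqrt_one.symm
      _ ≤ C₂ := Real.sqrt_le_sqrt h1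
  set C₁ : ℝ := (2 * s + 3) * 2 ^ (s + β) with hC₁
  have hC₁pos : 0 < C₁ := by rw [hC₁]; positivity
  refine ⟨C₁ * C₂, by nlinarith, ?_⟩
  intro c hfin h0 hreal
  set F : Finset ℤ := hfin.toFinset with hF
  have hnotF : ∀ n, n ∉ F → c n = 0 := by
    intro n hn
    by_contra h
    exact hn (by simp [hF, Function.mem_support, h])
  have hFne : ∀ k ∈ F, k ≠ 0 := by
    intro k hk hk0
    have : c k ≠ 0 := by simpa [hF, Function.mem_support] using hk
    exact this (hk0 ▸ h0)
  have hnormneg : ∀ n : ℤ, ‖c (-n)‖ = ‖c n‖ := fun n => by rw [hreal n, RCLike.norm_conj]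
  set W : ℤ → ℂ := fun n => (n : ℂ) * ((|(n : ℝ)| ^ (2 * s) : ℝ) : ℂ) with hW
  set f : ℤ × ℤ → ℂ := fun p => c p.1 * c p.2 * c (-(p.1 + p.2)) with hf
  set T : ℤ × ℤ → ℂ := fun p => W p.1 * f p with hT
  set f₁ : ℤ → ℝ := fun n => |(n : ℝ)| ^ (1 - 2 * β) * ‖c n‖ with hf₁
  set f₂ : ℤ → ℝ := fun n => |(n : ℝ)| ^ (s + β) * ‖c n‖ with hf₂
  set A : ℤ × ℤ → ℝ := fun p => f₁ p.1 * (f₂ p.2 * f₂ (p.1 + p.2)) with hA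
  set B : ℤ × ℤ → ℝ := fun p => f₂ p.1 * (f₁ p.2 * f₂ (p.1 + p.2)) with hB
  set Cc : ℤ × ℤ → ℝ := fun p => f₂ p.1 * (f₂ p.2 * f₁ (p.1 + p.2)) with hCc
  set σf : ℤ × ℤ → ℂ := fun p => (W p.1 + W p.2 + W (-(p.1 + p.2))) * f p with hσf
  have hf₁neg : ∀ n : ℤ, f₁ (-n) = f₁ n := by
    intro n; simp only [hf₁]; push_cast; rw [abs_neg, hnormneg]
  have hf₂neg : ∀ n : ℤ, f₂ (-n) = f₂ n := by
    intro n; simp only [hf₂]; push_cast; rw [abs_neg, hnormneg]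
  have hf₁nonneg : ∀ n, 0 ≤ f₁ n := fun n => by simp only [hf₁]; positivity
  have hf₂nonneg : ∀ n, 0 ≤ f₂ n := fun n => by simp only [hf₂]; positivity
  have hvan : ∀ p : ℤ × ℤ, p ∉ F ×ˢ F → c p.1 = 0 ∨ c p.2 = 0 := by
    intro p hp
    rw [Finset.mem_product] at hp
    push_neg at hp
    by_cases h1 : p.1 ∈ F
    · exact Or.inr (hnotF _ (hp h1))
    · exact Or.inl (hnotF _ h1)
  -- summability
  have hTvan : ∀ p ∉ F ×ˢ F, T p = 0 := by
    intro p hp; rcases hvan p hp with h | h <;> simp [hT, hf, h]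
  have hTsum : Summable T := summable_of_ne_finset_zero hTvan
  have hTinner : ∀ k : ℤ, Summable fun a => T (k, a) := by
    intro k
    apply summable_of_ne_finset_zero (s := F)
    intro a ha
    simp [hT, hf, hnotF a ha]
  have hsum1 : Summable fun p : ℤ × ℤ => W p.2 * f p := by
    apply summable_of_ne_finset_zero (s := F ×ˢ F)
    intro p hp; rcases hvan p hp with h | h <;> simp [hf, h]
  have hsum2 : Summable fun p : ℤ × ℤ => W (-(p.1 + p.2)) * f p := by
    apply summable_of_ne_finset_zero (s := F ×ˢ F)
    intro p hp; rcases hvan p hp with h | h <;> simp [hf, h]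
  have hAvan : ∀ p ∉ F ×ˢ F, A p = 0 := by
    intro p hp; rcases hvan p hp with h | h <;> simp [hA, hf₁, hf₂, h]
  have hBvan : ∀ p ∉ F ×ˢ F, B p = 0 := by
    intro p hp; rcases hvan p hp with h | h <;> simp [hB, hf₁, hf₂, h]
  have hCvan : ∀ p ∉ F ×ˢ F, Cc p = 0 := by
    intro p hp; rcases hvan p hp with h | h <;> simp [hCc, hf₁, hf₂, h]
  have hAsum : Summable A := summable_of_ne_finset_zero hAvan
  have hBsum : Summable B := summable_of_ne_finset_zero hBvan
  have hCsum : Summable Cc := summable_of_ne_finset_zero hCvan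
  have hσnormsum : Summable fun p => ‖σf p‖ := by
    apply summable_of_ne_finset_zero (s := F ×ˢ F)
    intro p hp; rcases hvan p hp with h | h <;> simp [hσf, hf, h]
  -- the statement sum equals the sum over pairs
  have hS : (∑' k : ℤ, ∑' a : ℤ,
      (k : ℂ) * ((|(k : ℝ)| ^ (2 * s) : ℝ) : ℂ) * c k * c a * c (-(k + a)))
      = ∑' p : ℤ × ℤ, T p := by
    rw [Summable.tsum_prod' hTsum hTinner]
    exact tsum_congr fun k => tsum_congr fun a => by simp only [hT, hW, hf]; ring
  -- symmetrization
  have hSa : ∑' p : ℤ × ℤ, T p = ∑' p : ℤ × ℤ, W p.2 * f p := by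
    rw [← Equiv.tsum_eq (Equiv.prodComm ℤ ℤ) T]
    refine tsum_congr fun p => ?_
    obtain ⟨k, a⟩ := p
    simp only [Equiv.prodComm_apply, Prod.swap_prod_mk, hT, hf]
    rw [show a + k = k + a from add_comm a k]
    ring
  have hSb : ∑' p : ℤ × ℤ, T p = ∑' p : ℤ × ℤ, W (-(p.1 + p.2)) * f p := by
    rw [← Equiv.tsum_eq eshift T]
    refine tsum_congr fun p => ?_
    obtain ⟨k, a⟩ := p
    rw [show eshift (k, a) = (-(k + a), a) from rfl]
    simp only [hT, hf]
    rw [show -(-(k + a) + a) = k by ring]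
    ring
  have h3S : (3 : ℂ) * (∑' p : ℤ × ℤ, T p) = ∑' p : ℤ × ℤ, σf p := by
    calc (3 : ℂ) * (∑' p : ℤ × ℤ, T p)
        = (∑' p : ℤ × ℤ, T p) + ((∑' p : ℤ × ℤ, W p.2 * f p)
            + (∑' p : ℤ × ℤ, W (-(p.1 + p.2)) * f p)) := by
          rw [← hSa, ← hSb]; ring
      _ = ∑' p : ℤ × ℤ, (T p + (W p.2 * f p + W (-(p.1 + p.2)) * f p)) := by
          rw [Summable.tsum_add hTsum (hsum1.add hsum2), Summable.tsum_add hsum1 hsum2]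
      _ = ∑' p : ℤ × ℤ, σf p := tsum_congr fun p => by simp only [hσf, hT]; ring
  -- pointwise bound
  have hpt : ∀ p : ℤ × ℤ, ‖σf p‖ ≤ C₁ * (A p + B p + Cc p) := by
    intro p
    obtain ⟨k, a⟩ := p
    have hABCnn : 0 ≤ A (k, a) + B (k, a) + Cc (k, a) := by
      have := hf₁nonneg; have := hf₂nonneg
      have h1 := mul_nonneg (hf₁nonneg k) (mul_nonneg (hf₂nonneg a) (hf₂nonneg (k + a)))
      have h2 := mul_nonneg (hf₂nonneg k) (mul_nonneg (hf₁nonneg a) (hf₂nonneg (k + a)))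
      have h3 := mul_nonneg (hf₂nonneg k) (mul_nonneg (hf₂nonneg a) (hf₁nonneg (k + a)))
      simp only [hA, hB, hCc]
      linarith
    by_cases h1 : c k = 0
    · simp only [hσf, hf, h1]
      simp
      nlinarith
    by_cases h2 : c a = 0
    · simp only [hσf, hf, h2]
      simp
      nlinarith
    by_cases h3 : c (k + a) = 0
    · have h3' : c (-(k + a)) = 0 := by rw [hreal (k + a), h3]; simp
      simp only [hσf, hf, h3']
      simp
      nlinarith
    have hk : k ≠ 0 := fun h => h1 (h ▸ h0)
    have ha : a ≠ 0 := fun h => h2 (h ▸ h0)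
    have hka' : -(k + a) ≠ 0 := by
      intro h
      apply h3
      have : k + a = 0 := by omega
      rw [this, h0]
    have htrio := trio s β hs hβ hk ha hka' (by ring)
    have hWsum : ‖W k + W a + W (-(k + a))‖
        = |gfun s (k : ℝ) + gfun s (a : ℝ) + gfun s ((-(k + a) : ℤ) : ℝ)| := by
      have he : W k + W a + W (-(k + a))
          = ((gfun s (k : ℝ) + gfun s (a : ℝ) + gfun s ((-(k + a) : ℤ) : ℝ) : ℝ) : ℂ) := by
        simp only [hW, gfun]
        push_cast
        ring
      rw [he, Complex.norm_real, Real.norm_eq_abs]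
    have hnf : ‖f (k, a)‖ = ‖c k‖ * (‖c a‖ * ‖c (k + a)‖) := by
      simp only [hf]
      rw [norm_mul, norm_mul, hnormneg]
      ring
    have habs : |((-(k + a) : ℤ) : ℝ)| = |((k + a : ℤ) : ℝ)| := by push_cast; rw [abs_neg]
    have hNnn : 0 ≤ ‖c k‖ * (‖c a‖ * ‖c (k + a)‖) := by positivity
    calc ‖σf (k, a)‖ = ‖W k + W a + W (-(k + a))‖ * ‖f (k, a)‖ := by
          simp only [hσf]; rw [norm_mul]
      _ = |gfun s (k : ℝ) + gfun s (a : ℝ) + gfun s ((-(k + a) : ℤ) : ℝ)|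
            * (‖c k‖ * (‖c a‖ * ‖c (k + a)‖)) := by rw [hWsum, hnf]
      _ ≤ ((2 * s + 3) * 2 ^ (s + β) *
            (|((a : ℤ) : ℝ)| ^ (1 - 2 * β) * (|((-(k + a) : ℤ) : ℝ)| ^ (s + β) * |((k : ℤ) : ℝ)| ^ (s + β))
             + |((-(k + a) : ℤ) : ℝ)| ^ (1 - 2 * β) * (|((a : ℤ) : ℝ)| ^ (s + β) * |((k : ℤ) : ℝ)| ^ (s + β))
             + |((k : ℤ) : ℝ)| ^ (1 - 2 * β) * (|((a : ℤ) : ℝ)| ^ (s + β) * |((-(k + a) : ℤ) : ℝ)| ^ (s + β))))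
            * (‖c k‖ * (‖c a‖ * ‖c (k + a)‖)) := mul_le_mul_of_nonneg_right htrio hNnn
      _ = C₁ * (A (k, a) + B (k, a) + Cc (k, a)) := by
          rw [habs]
          simp only [hA, hB, hCc, hf₁, hf₂, hC₁]
          push_cast
          ring
  -- sum the pointwise bound
  have hsum_pt : ∑' p : ℤ × ℤ, ‖σf p‖ ≤ C₁ * ((∑' p : ℤ × ℤ, A p) + (∑' p : ℤ × ℤ, B p)
      + (∑' p : ℤ × ℤ, Cc p)) := by
    calc ∑' p : ℤ × ℤ, ‖σf p‖ ≤ ∑' p : ℤ × ℤ, C₁ * (A p + B p + Cc p) :=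
          Summable.tsum_le_tsum hpt hσnormsum (((hAsum.add hBsum).add hCsum).mul_left C₁)
      _ = C₁ * ((∑' p : ℤ × ℤ, A p) + (∑' p : ℤ × ℤ, B p) + (∑' p : ℤ × ℤ, Cc p)) := by
          rw [tsum_mul_left, Summable.tsum_add (hAsum.add hBsum) hCsum, Summable.tsum_add hAsum hBsum]
  -- B and Cc sum to the same as A
  have hBA : ∑' p : ℤ × ℤ, B p = ∑' p : ℤ × ℤ, A p := by
    rw [← Equiv.tsum_eq (Equiv.prodComm ℤ ℤ) A]
    refine (tsum_congr fun p => ?_).symm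
    obtain ⟨k, a⟩ := p
    simp only [Equiv.prodComm_apply, Prod.swap_prod_mk, hA, hB]
    rw [show a + k = k + a from add_comm a k]
    ring
  have hCA : ∑' p : ℤ × ℤ, Cc p = ∑' p : ℤ × ℤ, A p := by
    rw [← Equiv.tsum_eq eshift A]
    refine (tsum_congr fun p => ?_).symm
    obtain ⟨k, a⟩ := p
    rw [show eshift (k, a) = (-(k + a), a) from rfl]
    simp only [hA, hCc]
    rw [show -(k + a) + a = -k by ring, hf₁neg, hf₂neg]
    ring
  -- estimate ∑' A
  set N₂ : ℝ := ∑' n : ℤ, |(n : ℝ)| ^ (2 * (s + β)) * ‖c n‖ ^ 2 with hN₂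
  have hN₂sum : Summable fun n : ℤ => |(n : ℝ)| ^ (2 * (s + β)) * ‖c n‖ ^ 2 := by
    apply summable_of_ne_finset_zero (s := F)
    intro n hn; rw [hnotF n hn]; simp
  have hN₂nn : 0 ≤ N₂ := tsum_nonneg fun n => by positivity
  have hf₂sq : ∀ n : ℤ, f₂ n ^ 2 = |(n : ℝ)| ^ (2 * (s + β)) * ‖c n‖ ^ 2 := by
    intro n
    simp only [hf₂]
    rw [mul_pow, rpow_sq _ (abs_nonneg _)]
  have hinner : ∀ k : ℤ, ∑ a ∈ F, f₂ a * f₂ (k + a) ≤ N₂ := by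
    intro k
    have hcs := Finset.sum_mul_sq_le_sq_mul_sq F f₂ (fun a => f₂ (k + a))
    have h1 : ∑ a ∈ F, f₂ a ^ 2 ≤ N₂ := by
      calc ∑ a ∈ F, f₂ a ^ 2 = ∑ a ∈ F, |(a : ℝ)| ^ (2 * (s + β)) * ‖c a‖ ^ 2 :=
            Finset.sum_congr rfl fun a _ => hf₂sq a
        _ ≤ N₂ := Summable.sum_le_tsum F (fun i _ => by positivity) hN₂sum
    have h2 : ∑ a ∈ F, f₂ (k + a) ^ 2 ≤ N₂ := by
      have hmap := Finset.sum_map F ⟨fun a => k + a, fun x y h => by simpa using h⟩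
        (fun n => |(n : ℝ)| ^ (2 * (s + β)) * ‖c n‖ ^ 2)
      calc ∑ a ∈ F, f₂ (k + a) ^ 2
          = ∑ a ∈ F, |((k + a : ℤ) : ℝ)| ^ (2 * (s + β)) * ‖c (k + a)‖ ^ 2 :=
            Finset.sum_congr rfl fun a _ => hf₂sq (k + a)
        _ = ∑ n ∈ F.map ⟨fun a => k + a, fun x y h => by simpa using h⟩,
              |(n : ℝ)| ^ (2 * (s + β)) * ‖c n‖ ^ 2 := hmap.symm
        _ ≤ N₂ := Summable.sum_le_tsum _ (fun i _ => by positivity) hN₂sum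
    have hx : 0 ≤ ∑ a ∈ F, f₂ a * f₂ (k + a) :=
      Finset.sum_nonneg fun a _ => mul_nonneg (hf₂nonneg a) (hf₂nonneg (k + a))
    have hsq : (∑ a ∈ F, f₂ a * f₂ (k + a)) ^ 2 ≤ N₂ ^ 2 := by
      calc (∑ a ∈ F, f₂ a * f₂ (k + a)) ^ 2
          ≤ (∑ a ∈ F, f₂ a ^ 2) * ∑ a ∈ F, f₂ (k + a) ^ 2 := hcs
        _ ≤ N₂ * N₂ := mul_le_mul h1 h2 (Finset.sum_nonneg fun a _ => sq_nonneg _) hN₂nn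
        _ = N₂ ^ 2 := (sq N₂).symm
    calc ∑ a ∈ F, f₂ a * f₂ (k + a) = Real.sqrt ((∑ a ∈ F, f₂ a * f₂ (k + a)) ^ 2) :=
          (Real.sqrt_sq hx).symm
      _ ≤ Real.sqrt (N₂ ^ 2) := Real.sqrt_le_sqrt hsq
      _ = N₂ := Real.sqrt_sq hN₂nn
  have houter : ∑ k ∈ F, f₁ k ≤ C₂ * hnorm q c := by
    have hsplit : ∀ k ∈ F, f₁ k = |(k : ℝ)| ^ (1 - 2 * β - q) * (|(k : ℝ)| ^ q * ‖c k‖) := by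
      intro k hk
      have hkpos : (0 : ℝ) < |(k : ℝ)| := by
        rw [abs_pos]
        exact_mod_cast hFne k hk
      simp only [hf₁]
      rw [← mul_assoc, ← Real.rpow_add hkpos, show 1 - 2 * β - q + q = 1 - 2 * β by ring]
    have hcs := Finset.sum_mul_sq_le_sq_mul_sq F (fun k => |(k : ℝ)| ^ (1 - 2 * β - q))
      (fun k => |(k : ℝ)| ^ q * ‖c k‖)
    have h1 : ∑ k ∈ F, (|(k : ℝ)| ^ (1 - 2 * β - q)) ^ 2 ≤ C₂ ^ 2 := by
      rw [hC₂sq]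
      calc ∑ k ∈ F, (|(k : ℝ)| ^ (1 - 2 * β - q)) ^ 2
          = ∑ k ∈ F, |(k : ℝ)| ^ (2 * (1 - 2 * β - q)) :=
            Finset.sum_congr rfl fun k _ => rpow_sq _ (abs_nonneg _) _
        _ ≤ _ := Summable.sum_le_tsum F (fun i _ => Real.rpow_nonneg (abs_nonneg _) _) hsum_exp
    have hqsum : Summable fun n : ℤ => |(n : ℝ)| ^ (2 * q) * ‖c n‖ ^ 2 := by
      apply summable_of_ne_finset_zero (s := F)
      intro n hn; rw [hnotF n hn]; simp
    have h2 : ∑ k ∈ F, (|(k : ℝ)| ^ q * ‖c k‖) ^ 2 ≤ hnorm q c ^ 2 := by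
      rw [hnorm_sq]
      calc ∑ k ∈ F, (|(k : ℝ)| ^ q * ‖c k‖) ^ 2
          = ∑ k ∈ F, |(k : ℝ)| ^ (2 * q) * ‖c k‖ ^ 2 :=
            Finset.sum_congr rfl fun k _ => by rw [mul_pow, rpow_sq _ (abs_nonneg _)]
        _ ≤ _ := Summable.sum_le_tsum F (fun i _ => by positivity) hqsum
    have hx : 0 ≤ ∑ k ∈ F, f₁ k := Finset.sum_nonneg fun k _ => hf₁nonneg k
    have heq : ∑ k ∈ F, f₁ k = ∑ k ∈ F, |(k : ℝ)| ^ (1 - 2 * β - q) * (|(k : ℝ)| ^ q * ‖c k‖) :=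
      Finset.sum_congr rfl hsplit
    have hC₂nn : (0 : ℝ) ≤ C₂ := by linarith
    have hhn : 0 ≤ hnorm q c := hnorm_nonneg q c
    have hsq : (∑ k ∈ F, f₁ k) ^ 2 ≤ (C₂ * hnorm q c) ^ 2 := by
      rw [heq]
      calc (∑ k ∈ F, |(k : ℝ)| ^ (1 - 2 * β - q) * (|(k : ℝ)| ^ q * ‖c k‖)) ^ 2
          ≤ (∑ k ∈ F, (|(k : ℝ)| ^ (1 - 2 * β - q)) ^ 2)
            * ∑ k ∈ F, (|(k : ℝ)| ^ q * ‖c k‖) ^ 2 := hcs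
        _ ≤ C₂ ^ 2 * hnorm q c ^ 2 :=
            mul_le_mul h1 h2 (Finset.sum_nonneg fun k _ => sq_nonneg _) (by positivity)
        _ = (C₂ * hnorm q c) ^ 2 := by ring
    calc ∑ k ∈ F, f₁ k = Real.sqrt ((∑ k ∈ F, f₁ k) ^ 2) := (Real.sqrt_sq hx).symm
      _ ≤ Real.sqrt ((C₂ * hnorm q c) ^ 2) := Real.sqrt_le_sqrt hsq
      _ = C₂ * hnorm q c := Real.sqrt_sq (by positivity)
  have hAbound : ∑' p : ℤ × ℤ, A p ≤ (C₂ * hnorm q c) * N₂ := by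
    have hAeq : ∑' p : ℤ × ℤ, A p = ∑ p ∈ F ×ˢ F, A p := tsum_eq_sum hAvan
    rw [hAeq, Finset.sum_product]
    calc ∑ k ∈ F, ∑ a ∈ F, A (k, a)
        = ∑ k ∈ F, f₁ k * ∑ a ∈ F, f₂ a * f₂ (k + a) := by
          refine Finset.sum_congr rfl fun k _ => ?_
          rw [Finset.mul_sum]
      _ ≤ ∑ k ∈ F, f₁ k * N₂ :=
          Finset.sum_le_sum fun k _ => mul_le_mul_of_nonneg_left (hinner k) (hf₁nonneg k)
      _ = (∑ k ∈ F, f₁ k) * N₂ := (Finset.sum_mul _ _ _).symm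
      _ ≤ (C₂ * hnorm q c) * N₂ := mul_le_mul_of_nonneg_right houter hN₂nn
  have hN₂eq : N₂ = hnorm (s + β) c ^ 2 := by rw [hnorm_sq]
  -- final chain
  rw [hS]
  have h3 : ‖(3 : ℂ) * ∑' p : ℤ × ℤ, T p‖ = 3 * ‖∑' p : ℤ × ℤ, T p‖ := by
    rw [norm_mul]
    norm_num
  have hkey : 3 * ‖∑' p : ℤ × ℤ, T p‖ ≤ 3 * (C₁ * C₂ * hnorm q c * hnorm (s + β) c ^ 2) := by
    calc 3 * ‖∑' p : ℤ × ℤ, T p‖ = ‖∑' p : ℤ × ℤ, σf p‖ := by rw [← h3, h3S]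
      _ ≤ ∑' p : ℤ × ℤ, ‖σf p‖ := norm_tsum_le_tsum_norm hσnormsum
      _ ≤ C₁ * ((∑' p : ℤ × ℤ, A p) + (∑' p : ℤ × ℤ, B p) + (∑' p : ℤ × ℤ, Cc p)) := hsum_pt
      _ = C₁ * (3 * ∑' p : ℤ × ℤ, A p) := by rw [hBA, hCA]; ring
      _ ≤ C₁ * (3 * ((C₂ * hnorm q c) * N₂)) := by
          refine mul_le_mul_of_nonneg_left ?_ hC₁pos.le
          linarith
      _ = 3 * (C₁ * C₂ * hnorm q c * hnorm (s + β) c ^ 2) := by rw [hN₂eq]; ring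
  linarith
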